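/- Let n ≥ 2 be a natural number, σ > 0, m ≥ 1 a natural number, V > 0 a real number, and let ω_n denote the Lebesgue volume of the unit ball in ℝⁿ. Let ψ₁, ψ₂ : ℝ → ℝ be differentiable on a neighborhood of θ_* > 0 with ψ₁′, ψ₂′ differentiable at θ_*, and assume j(θ) := ψ₂(θ) − ψ₁(θ) > 0 on that neighborhood. Define R(θ) := (n−1)σ/j(θ), V₁(θ) := m·ω_n·R(θ)ⁿ, |Γ|(θ) := m·n·ω_n·R(θ)^{n−1}, and the equilibrium energy φ(θ) := ε₁(θ)·V₁(θ) + ε₂(θ)·(V − V₁(θ)) + σ·|Γ|(θ). Then φ is differentiable at θ_* with φ′(θ_*) = κ₁(θ_*)·V₁(θ_*) + κ₂(θ_*)·(V − V₁(θ_*)) − l(θ_*)²·|Γ|(θ_*)·R(θ_*)²/(θ_*·(n−1)·σ). -/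

import Mathlib

open MeasureTheory

set_option maxHeartbeats 1000000

/-- Derivative of the equilibrium energy `φ` at the equilibrium temperature `θ_*`:
`φ′(θ_*) = κ₁(θ_*)·V₁(θ_*) + κ₂(θ_*)·(V − V₁(θ_*)) − l(θ_*)²·|Γ_*|·R_*²/(θ_*(n−1)σ)`. -/
theorem equilibrium_energy_derivative
    (n : ℕ) (hn : 2 ≤ n) (σ : ℝ) (hσ : 0 < σ)
    (m : ℕ) (hm : 1 ≤ m) (V : ℝ) (hV : 0 < V)
    (θstar : ℝ) (hθ : 0 < θstar)
    (ψ₁ ψ₂ ψ₁' ψ₂' : ℝ → ℝ)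
    (U : Set ℝ) (hU : U ∈ nhds θstar)
    (hψ₁ : ∀ θ ∈ U, HasDerivAt ψ₁ (ψ₁' θ) θ)
    (hψ₂ : ∀ θ ∈ U, HasDerivAt ψ₂ (ψ₂' θ) θ)
    (ψ₁'' ψ₂'' : ℝ)
    (hψ₁'' : HasDerivAt ψ₁' ψ₁'' θstar)
    (hψ₂'' : HasDerivAt ψ₂' ψ₂'' θstar)
    (hj : ∀ θ ∈ U, 0 < ψ₂ θ - ψ₁ θ)
    (ωn : ℝ)
    (hωn : ωn = (volume (Metric.ball (0 : EuclideanSpace ℝ (Fin n)) 1)).toReal)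
    (R V₁ Γ ε₁ ε₂ φ : ℝ → ℝ)
    (hR : ∀ θ, R θ = (n - 1 : ℝ) * σ / (ψ₂ θ - ψ₁ θ))
    (hV₁ : ∀ θ, V₁ θ = m * ωn * (R θ) ^ n)
    (hΓ : ∀ θ, Γ θ = m * n * ωn * (R θ) ^ (n - 1))
    (hε₁ : ∀ θ, ε₁ θ = ψ₁ θ - θ * ψ₁' θ)
    (hε₂ : ∀ θ, ε₂ θ = ψ₂ θ - θ * ψ₂' θ)
    (hφ : ∀ θ, φ θ = ε₁ θ * V₁ θ + ε₂ θ * (V - V₁ θ) + σ * Γ θ)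
    (κ₁ κ₂ l : ℝ)
    (hκ₁ : κ₁ = -θstar * ψ₁'') (hκ₂ : κ₂ = -θstar * ψ₂'')
    (hl : l = θstar * (ψ₂' θstar - ψ₁' θstar)) :
    HasDerivAt φ
      (κ₁ * V₁ θstar + κ₂ * (V - V₁ θstar)
        - l ^ 2 * Γ θstar * (R θstar) ^ 2 / (θstar * (n - 1 : ℝ) * σ)) θstar := by
  have hθU : θstar ∈ U := mem_of_mem_nhds hU
  obtain ⟨k, rfl⟩ : ∃ k, n = k + 2 := ⟨n - 2, by omega⟩
  have hjpos := hj θstar hθU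
  have hjne : ψ₂ θstar - ψ₁ θstar ≠ 0 := ne_of_gt hjpos
  set c : ℝ := ((k + 2 : ℕ) - 1 : ℝ) * σ with hc
  have hjd : HasDerivAt (fun θ => ψ₂ θ - ψ₁ θ) (ψ₂' θstar - ψ₁' θstar) θstar :=
    (hψ₂ θstar hθU).sub (hψ₁ θstar hθU)
  set j' : ℝ := ψ₂' θstar - ψ₁' θstar with hj'
  set R' : ℝ := (0 * (ψ₂ θstar - ψ₁ θstar) - c * j') / (ψ₂ θstar - ψ₁ θstar) ^ 2 with hR'
  have hRd : HasDerivAt R R' θstar := by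
    rw [funext hR]
    exact (hasDerivAt_const _ c).div hjd hjne
  have hV₁d : HasDerivAt V₁ ((m : ℝ) * ωn * ((k + 2 : ℕ) * R θstar ^ (k + 1) * R')) θstar := by
    rw [funext hV₁]
    exact (hRd.pow (k + 2)).const_mul _
  have hΓd : HasDerivAt Γ ((m : ℝ) * (k + 2 : ℕ) * ωn * ((k + 1 : ℕ) * R θstar ^ k * R')) θstar := by
    have : ∀ θ, Γ θ = (m : ℝ) * (k + 2 : ℕ) * ωn * R θ ^ (k + 1) := by
      intro θ; rw [hΓ θ]; norm_num
    rw [funext this]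
    simpa using (hRd.pow (k + 1)).const_mul ((m : ℝ) * (k + 2 : ℕ) * ωn)
  have hε₁d : HasDerivAt ε₁ (ψ₁' θstar - (1 * ψ₁' θstar + θstar * ψ₁'')) θstar := by
    rw [funext hε₁]
    exact (hψ₁ θstar hθU).sub ((hasDerivAt_id θstar).mul hψ₁'')
  have hε₂d : HasDerivAt ε₂ (ψ₂' θstar - (1 * ψ₂' θstar + θstar * ψ₂'')) θstar := by
    rw [funext hε₂]
    exact (hψ₂ θstar hθU).sub ((hasDerivAt_id θstar).mul hψ₂'')
  have hφd : HasDerivAt φ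
      ((ψ₁' θstar - (1 * ψ₁' θstar + θstar * ψ₁'')) * V₁ θstar
        + ε₁ θstar * ((m : ℝ) * ωn * ((k + 2 : ℕ) * R θstar ^ (k + 1) * R'))
        + ((ψ₂' θstar - (1 * ψ₂' θstar + θstar * ψ₂'')) * (V - V₁ θstar)
          + ε₂ θstar * (0 - (m : ℝ) * ωn * ((k + 2 : ℕ) * R θstar ^ (k + 1) * R')))
        + σ * ((m : ℝ) * (k + 2 : ℕ) * ωn * ((k + 1 : ℕ) * R θstar ^ k * R'))) θstar := by
    rw [funext hφ]
    exact ((hε₁d.mul hV₁d).add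
      (hε₂d.mul ((hasDerivAt_const _ V).sub hV₁d))).add (hΓd.const_mul σ)
  have hRR : R θstar = c / (ψ₂ θstar - ψ₁ θstar) := hR θstar
  have hθne : θstar ≠ 0 := hθ.ne'
  have hσne : σ ≠ 0 := hσ.ne'
  have hc2 : c = (k : ℝ) * σ + σ := by rw [hc]; push_cast; ring
  have hcpos : 0 < c := by rw [hc2]; positivity
  set r := R θstar with hr
  have hrpos : 0 < r := by rw [hRR]; exact div_pos hcpos hjpos
  have hrne : r ≠ 0 := hrpos.ne'
  have hjr : (ψ₂ θstar - ψ₁ θstar) * r = c := by rw [hRR]; field_simp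
  have hψ2' : ψ₂ θstar - ψ₁ θstar = c / r := by
    rw [eq_div_iff hrne]; exact hjr
  have hψ2 : ψ₂ θstar = ψ₁ θstar + c / r := by
    have := hψ2'; linarith
  have hR'v : R' = -(r ^ 2 * j') / c := by
    rw [hR', hψ2']
    field_simp
    ring
  convert hφd using 1
  rw [hκ₁, hκ₂, hl, hV₁ θstar, hΓ θstar, hε₁ θstar, hε₂ θstar, hψ2, hR'v,
    show θstar * ((↑(k + 2) : ℝ) - 1) * σ = θstar * c by rw [hc]; ring,
    ← hr]
  have hcne : c ≠ 0 := hcpos.ne'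
  field_simp [hcne]
  ring_nf
  push_cast
  rw [show 2 + k - 1 = k + 1 by omega, hj', hc2]
  ring
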